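/- Let 𝕜 be a field and let T : V → W be a linear map between finite-dimensional 𝕜-vector spaces. Suppose given filtrations by subspaces 0 = X₀ ⊆ X₁ ⊆ ⋯ ⊆ X_d = V and 0 = Y₀ ⊆ Y₁ ⊆ ⋯ ⊆ Y_{d−1} = W such that X_j = T⁻¹(Y_{j−1}) for all j = 1, …, d. If G : V → V is a linear automorphism with G(X_j) = X_j for all j, then there exists a linear automorphism H : W → W with H(Y_j) = Y_j for all j = 0, …, d−1 and H ∘ T = T ∘ G. -/

import Mathlib

/-- Relative complement: any subspace `p ≤ Y` has a complement inside `Y`. -/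
lemma exists_relative_compl {K M : Type*} [Field K] [AddCommGroup M] [Module K M]
    (p Y : Submodule K M) (h : p ≤ Y) :
    ∃ r : Submodule K M, r ≤ Y ∧ p ⊓ r = ⊥ ∧ p ⊔ r = Y := by
  obtain ⟨r', hr'⟩ := Submodule.exists_isCompl (Submodule.comap Y.subtype p)
  refine ⟨Submodule.map Y.subtype r', Submodule.map_subtype_le _ _, ?_, ?_⟩
  · have hp : p = Submodule.map Y.subtype (Submodule.comap Y.subtype p) := by
      rw [Submodule.map_comap_subtype, inf_eq_right.2 h]
    rw [hp, ← Submodule.map_inf _ (Submodule.injective_subtype Y),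
      disjoint_iff.1 hr'.disjoint, Submodule.map_bot]
  · have hp : p = Submodule.map Y.subtype (Submodule.comap Y.subtype p) := by
      rw [Submodule.map_comap_subtype, inf_eq_right.2 h]
    rw [hp, ← Submodule.map_sup, codisjoint_iff.1 hr'.codisjoint,
      Submodule.map_subtype_top]

/-- Given `T : V → W`, filtrations `0 = X₀ ⊆ ⋯ ⊆ X_d = V` and `0 = Y₀ ⊆ ⋯ ⊆ Y_{d−1} = W`
with `X_j = T⁻¹(Y_{j−1})` for `j = 1, …, d`, any automorphism `G` of `V` preserving the `X_j`
extends to an automorphism `H` of `W` preserving the `Y_j` with `H ∘ T = T ∘ G`. -/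
theorem exists_automorphism_compatible_with_filtration
    (𝕜 : Type*) [Field 𝕜]
    (V W : Type*) [AddCommGroup V] [Module 𝕜 V] [FiniteDimensional 𝕜 V]
    [AddCommGroup W] [Module 𝕜 W] [FiniteDimensional 𝕜 W]
    (T : V →ₗ[𝕜] W) (d : ℕ) (hd : 1 ≤ d)
    (Xf : ℕ → Submodule 𝕜 V) (Yf : ℕ → Submodule 𝕜 W)
    (hX0 : Xf 0 = ⊥) (hXd : Xf d = ⊤)
    (hXmono : ∀ j, j + 1 ≤ d → Xf j ≤ Xf (j + 1))
    (hY0 : Yf 0 = ⊥) (hYtop : Yf (d - 1) = ⊤)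
    (hYmono : ∀ j, j + 1 ≤ d - 1 → Yf j ≤ Yf (j + 1))
    (hcomp : ∀ j, 1 ≤ j → j ≤ d → Xf j = Submodule.comap T (Yf (j - 1)))
    (G : V ≃ₗ[𝕜] V)
    (hG : ∀ j, j ≤ d → Submodule.map (G : V →ₗ[𝕜] V) (Xf j) = Xf j) :
    ∃ H : W ≃ₗ[𝕜] W,
      (∀ j, j ≤ d - 1 → Submodule.map (H : W →ₗ[𝕜] W) (Yf j) = Yf j) ∧
      ∀ v : V, H (T v) = T (G v) := by
  classical
  set R : Submodule 𝕜 W := LinearMap.range T with hR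
  -- key fact : Yf j ⊓ R = map T (Xf (j+1)) for j ≤ d - 1
  have hYR : ∀ j, j ≤ d - 1 → Yf j ⊓ R = Submodule.map T (Xf (j + 1)) := by
    intro j hj
    have h1 : Xf (j + 1) = Submodule.comap T (Yf j) := by
      have := hcomp (j + 1) (by omega) (by omega)
      simpa using this
    rw [h1, Submodule.map_comap_eq, inf_comm]
  -- adapted complement
  have key : ∀ j, j ≤ d - 1 → ∃ C : Submodule 𝕜 W,
      C ≤ Yf j ∧ C ⊓ R = ⊥ ∧ C ⊔ (Yf j ⊓ R) = Yf j ∧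
      ∀ i, i ≤ j → (Yf i ⊓ R) ⊔ (Yf i ⊓ C) = Yf i := by
    intro j
    induction j with
    | zero =>
      intro _
      refine ⟨⊥, by simp [hY0], by simp, by simp [hY0], ?_⟩
      intro i hi
      interval_cases i
      simp [hY0]
    | succ n ih =>
      intro hn
      obtain ⟨C, hCle, hCdisj, hCsup, hCadapt⟩ := ih (by omega)
      have hYn : Yf n ≤ Yf (n + 1) := hYmono n hn
      have hple : (Yf (n + 1) ⊓ R) ⊔ C ≤ Yf (n + 1) :=
        sup_le inf_le_left (hCle.trans hYn)
      obtain ⟨r, hrle, hrdisj, hrsup⟩ :=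
        exists_relative_compl ((Yf (n + 1) ⊓ R) ⊔ C) (Yf (n + 1)) hple
      refine ⟨C ⊔ r, sup_le (hCle.trans hYn) hrle, ?_, ?_, ?_⟩
      · -- disjointness of C ⊔ r with R
        rw [eq_bot_iff]
        rintro x ⟨hx1, hx2⟩
        obtain ⟨y, hy, z, hz, rfl⟩ := Submodule.mem_sup.1 hx1
        have hzmem : z ∈ ((Yf (n + 1) ⊓ R) ⊔ C) ⊓ r := by
          refine ⟨?_, hz⟩
          have hyz : y + z ∈ Yf (n + 1) ⊓ R := by
            refine ⟨?_, hx2⟩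
            exact Submodule.add_mem _ (hYn (hCle hy)) (hrle hz)
          have : z = (y + z) - y := by abel
          rw [this]
          exact Submodule.sub_mem _ (Submodule.mem_sup_left hyz)
            (Submodule.mem_sup_right hy)
        rw [hrdisj] at hzmem
        simp only [Submodule.mem_bot] at hzmem
        subst hzmem
        have : y ∈ C ⊓ R := ⟨hy, by simpa using hx2⟩
        rw [hCdisj] at this
        simpa using this
      · -- sup
        calc (C ⊔ r) ⊔ (Yf (n + 1) ⊓ R) = ((Yf (n + 1) ⊓ R) ⊔ C) ⊔ r := by
              rw [sup_comm (C ⊔ r) (Yf (n + 1) ⊓ R), ← sup_assoc]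
          _ = Yf (n + 1) := hrsup
      · intro i hi
        rcases Nat.lt_or_ge i (n + 1) with h | h
        · have hprev := hCadapt i (by omega)
          refine le_antisymm (sup_le inf_le_left inf_le_left) ?_
          calc Yf i = Yf i ⊓ R ⊔ Yf i ⊓ C := hprev.symm
            _ ≤ Yf i ⊓ R ⊔ Yf i ⊓ (C ⊔ r) :=
                sup_le_sup le_rfl (inf_le_inf_left _ le_sup_left)
        · have : i = n + 1 := by omega
          subst this
          have hCr : Yf (n + 1) ⊓ (C ⊔ r) = C ⊔ r :=
            inf_eq_right.2 (sup_le (hCle.trans hYn) hrle)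
          rw [hCr, sup_comm]
          calc (C ⊔ r) ⊔ (Yf (n + 1) ⊓ R) = ((Yf (n + 1) ⊓ R) ⊔ C) ⊔ r := by
                rw [sup_comm (C ⊔ r) (Yf (n + 1) ⊓ R), ← sup_assoc]
            _ = Yf (n + 1) := hrsup
  obtain ⟨C, hCle, hCdisj, hCsup, hCadapt⟩ := key (d - 1) le_rfl
  have hRC : IsCompl R C := by
    constructor
    · rw [disjoint_iff, inf_comm]
      exact hCdisj
    · rw [codisjoint_iff, sup_comm]
      rw [hYtop] at hCsup
      simpa using hCsup
  -- the map f = T ∘ G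
  set f : V →ₗ[𝕜] W := T ∘ₗ (G : V →ₗ[𝕜] V) with hf
  have hkerT : Xf 1 = LinearMap.ker T := by
    have := hcomp 1 le_rfl hd
    simpa [hY0] using this
  have hker : LinearMap.ker f = LinearMap.ker T := by
    rw [hf, LinearMap.ker_comp]
    conv_lhs => rw [← hkerT, ← hG 1 hd]
    rw [Submodule.comap_map_eq_of_injective (f := (G : V →ₗ[𝕜] V)) G.injective (Xf 1), hkerT]
  have hrange : LinearMap.range f = R := by
    rw [hf, LinearMap.range_comp, LinearEquiv.range, Submodule.map_top]
  -- the automorphism of R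
  set φ : R ≃ₗ[𝕜] R :=
    ((T.quotKerEquivRange.symm.trans
      (Submodule.quotEquivOfEq _ _ hker.symm)).trans
      f.quotKerEquivRange).trans (LinearEquiv.ofEq _ _ hrange) with hφ
  have hφ_apply : ∀ (v : V) (h : T v ∈ R), (φ ⟨T v, h⟩ : W) = T (G v) := by
    intro v h
    have h1 : T.quotKerEquivRange.symm ⟨T v, h⟩ = Submodule.Quotient.mk v := by
      have := T.quotKerEquivRange_symm_apply_image v h
      simpa [Submodule.mkQ_apply] using this
    simp only [hφ, LinearEquiv.trans_apply, h1, Submodule.quotEquivOfEq_mk,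
      LinearEquiv.coe_ofEq_apply]
    have := LinearMap.quotKerEquivRange_apply_mk f v
    simpa [hf] using this
  -- assemble H
  set e := Submodule.prodEquivOfIsCompl R C hRC with he
  set H : W ≃ₗ[𝕜] W := (e.symm.trans (φ.prodCongr (LinearEquiv.refl 𝕜 C))).trans e with hH
  have hHT : ∀ v : V, H (T v) = T (G v) := by
    intro v
    have hmem : T v ∈ R := ⟨v, rfl⟩
    have h1 : e.symm (T v) = (⟨T v, hmem⟩, 0) := by
      have := Submodule.prodEquivOfIsCompl_symm_apply_left (p := R) (q := C) hRC ⟨T v, hmem⟩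
      simpa [he] using this
    simp only [hH, LinearEquiv.trans_apply, h1, LinearEquiv.prodCongr_apply]
    simp [he, Submodule.coe_prodEquivOfIsCompl', hφ_apply v hmem]
  have hHC : ∀ c : W, c ∈ C → H c = c := by
    intro c hc
    have h1 : e.symm c = (0, ⟨c, hc⟩) := by
      have := Submodule.prodEquivOfIsCompl_symm_apply_right (p := R) (q := C) hRC ⟨c, hc⟩
      simpa [he] using this
    simp only [hH, LinearEquiv.trans_apply, h1, LinearEquiv.prodCongr_apply]
    simp [he, Submodule.coe_prodEquivOfIsCompl']
  refine ⟨H, ?_, hHT⟩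
  intro j hj
  have hadapt := hCadapt j hj
  conv_lhs => rw [← hadapt]
  rw [Submodule.map_sup]
  have h1 : Submodule.map (H : W →ₗ[𝕜] W) (Yf j ⊓ R) = Yf j ⊓ R := by
    rw [hYR j hj, ← Submodule.map_comp]
    have hHTl : (H : W →ₗ[𝕜] W) ∘ₗ T = T ∘ₗ (G : V →ₗ[𝕜] V) := by
      ext v; exact hHT v
    rw [hHTl, Submodule.map_comp, hG (j + 1) (by omega)]
  have h2 : Submodule.map (H : W →ₗ[𝕜] W) (Yf j ⊓ C) = Yf j ⊓ C := by
    apply le_antisymm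
    · rw [Submodule.map_le_iff_le_comap]
      intro x hx
      simp only [Submodule.mem_comap, LinearEquiv.coe_coe]
      rw [hHC x hx.2]
      exact hx
    · intro x hx
      exact ⟨x, hx, by simp only [LinearEquiv.coe_coe]; exact hHC x hx.2⟩
  rw [h1, h2, hadapt]
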